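/- arXiv:2010.05674 — 15 statements merged into one kernel-verified Lean document; each statement's English description precedes it below -/
import Mathlib

section
/- If f : [0,∞) → [0,∞) is continuous with f(0) = 0 and x ↦ f(x^(1/p)) is convex on [0,∞) for some p ≥ 1, then f itself is convex on [0,∞). -/
theorem radical_convex_convex (f : ℝ → ℝ) (p : ℝ) (hp : 1 ≤ p)
    (hmap : ∀ x ∈ Set.Ici (0:ℝ), 0 ≤ f x)
    (hcont : ContinuousOn f (Set.Ici 0))
    (hf0 : f 0 = 0)
    (hconv : ConvexOn ℝ (Set.Ici 0) (fun x => f (x ^ (1/p)))) :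
    ConvexOn ℝ (Set.Ici 0) f := by
  have hp0 : (0:ℝ) < p := lt_of_lt_of_le one_pos hp
  set g : ℝ → ℝ := fun x => f (x ^ (1/p)) with hg
  -- f t = g (t ^ p) for t ≥ 0
  have hfg : ∀ t : ℝ, 0 ≤ t → f t = g (t ^ p) := by
    intro t ht
    simp only [hg]
    rw [← Real.rpow_mul ht, mul_one_div, div_self hp0.ne', Real.rpow_one]
  -- g is monotone on Ici 0
  have hmono : MonotoneOn g (Set.Ici 0) := by
    intro x hx y hy hxy
    rcases eq_or_lt_of_le (Set.mem_Ici.1 hy : (0:ℝ) ≤ y) with h0 | h0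
    · have hx0 : x = 0 := le_antisymm (hxy.trans h0.ge) hx
      simp [hx0, ← h0]
    · have hb : 0 ≤ x / y := div_nonneg hx h0.le
      have hb1 : x / y ≤ 1 := (div_le_one h0).2 hxy
      have := hconv.2 (Set.self_mem_Ici) (hy : y ∈ Set.Ici (0:ℝ))
        (sub_nonneg.2 hb1) hb (by ring)
      simp only [smul_eq_mul, mul_zero, zero_add] at this
      rw [div_mul_cancel₀ x h0.ne'] at this
      have hg0 : g 0 = 0 := by
        simp only [hg]
        rw [Real.zero_rpow (by positivity : (1:ℝ)/p ≠ 0), hf0]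
      rw [hg0] at this
      have hgy : 0 ≤ g y := hmap _ (Set.mem_Ici.2 (Real.rpow_nonneg h0.le _))
      calc g x ≤ (1 - x/y) * 0 + (x/y) * g y := by simpa using this
        _ ≤ g y := by nlinarith
  refine ⟨convex_Ici 0, fun x hx y hy a b ha hb hab => ?_⟩
  simp only [smul_eq_mul]
  have hx0 : (0:ℝ) ≤ x := hx
  have hy0 : (0:ℝ) ≤ y := hy
  have hxy0 : 0 ≤ a * x + b * y := by positivity
  rw [hfg _ hx0, hfg _ hy0, hfg _ hxy0]
  have hrpow := convexOn_rpow hp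
  have h1 : (a * x + b * y) ^ p ≤ a * x ^ p + b * y ^ p := by
    have := hrpow.2 (Set.mem_Ici.2 hx0) (Set.mem_Ici.2 hy0) ha hb hab
    simpa using this
  have h2 : g ((a*x+b*y) ^ p) ≤ g (a * x ^ p + b * y ^ p) := by
    apply hmono (Set.mem_Ici.2 (Real.rpow_nonneg hxy0 _)) _ h1
    have : 0 ≤ a * x ^ p + b * y ^ p := by positivity
    exact this
  refine h2.trans ?_
  have := hconv.2 (Set.mem_Ici.2 (Real.rpow_nonneg hx0 p))
    (Set.mem_Ici.2 (Real.rpow_nonneg hy0 p)) ha hb hab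
  simpa using this
end

section
/- If f is p-radical convex for some p ≥ 1, then f is q-radical convex for every q with 1 ≤ q ≤ p, i.e., the function x ↦ f(x^(1/q)) is convex on [0,∞). -/
theorem radical_convex_lower_exponent (f : ℝ → ℝ) (p q : ℝ) (hq : 1 ≤ q) (hqp : q ≤ p)
    (hmap : ∀ x ∈ Set.Ici (0:ℝ), 0 ≤ f x)
    (hcont : ContinuousOn f (Set.Ici 0))
    (hf0 : f 0 = 0)
    (hconv : ConvexOn ℝ (Set.Ici 0) (fun x => f (x ^ (1/p)))) :
    ConvexOn ℝ (Set.Ici 0) (fun x => f (x ^ (1/q))) := by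
  have hq0 : 0 < q := lt_of_lt_of_le one_pos hq
  have hp0 : 0 < p := lt_of_lt_of_le (lt_of_lt_of_le one_pos hq) hqp
  set g : ℝ → ℝ := fun x => f (x ^ (1/p)) with hg
  -- g 0 = 0
  have hg0 : g 0 = 0 := by
    simp only [hg]
    rw [Real.zero_rpow (by positivity), hf0]
  -- g is nonnegative on Ici 0
  have hgnn : ∀ x ∈ Set.Ici (0:ℝ), 0 ≤ g x := fun x hx =>
    hmap _ (Real.rpow_nonneg hx _)
  -- g is monotone on Ici 0
  have hmono : MonotoneOn g (Set.Ici 0) := by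
    intro u hu v hv huv
    rcases eq_or_lt_of_le huv with rfl | hlt
    · exact le_rfl
    · have hv0 : 0 < v := lt_of_le_of_lt hu hlt
      have h1 : (0:ℝ) ≤ 1 - u/v := by
        have : u/v ≤ 1 := (div_le_one hv0).2 huv
        linarith
      have h2 : (0:ℝ) ≤ u/v := div_nonneg hu hv0.le
      have key := hconv.2 (Set.self_mem_Ici) hv h1 h2 (by ring)
      simp only [smul_eq_mul, mul_zero, zero_add] at key
      have harg : u/v * v = u := by field_simp
      rw [harg] at key
      calc g u ≤ (1 - u/v) * g 0 + u/v * g v := key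
        _ = u/v * g v := by rw [hg0]; ring
        _ ≤ 1 * g v := mul_le_mul_of_nonneg_right ((div_le_one hv0).2 huv) (hgnn v hv)
        _ = g v := one_mul _
  -- x ↦ x^(p/q) maps Ici 0 onto Ici 0
  have himg : (fun x : ℝ => x ^ (p/q)) '' Set.Ici 0 = Set.Ici 0 := by
    apply Set.Subset.antisymm
    · rintro _ ⟨x, hx, rfl⟩
      exact Real.rpow_nonneg hx _
    · intro y hy
      refine ⟨y ^ (q/p), Real.rpow_nonneg hy _, ?_⟩
      have hqp1 : q/p * (p/q) = 1 := by field_simp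
      show (y ^ (q/p)) ^ (p/q) = y
      rw [← Real.rpow_mul hy, hqp1, Real.rpow_one]
  have hpq1 : 1 ≤ p / q := (one_le_div hq0).2 hqp
  have hcomp : ConvexOn ℝ (Set.Ici 0) (g ∘ fun x : ℝ => x ^ (p/q)) := by
    refine ConvexOn.comp ?_ (convexOn_rpow hpq1) ?_
    · rw [himg]; exact hconv
    · rw [himg]; exact hmono
  refine ⟨convex_Ici 0, fun x hx y hy a b ha hb hab => ?_⟩
  have heq : ∀ z ∈ Set.Ici (0:ℝ), f (z ^ (1/q)) = (g ∘ fun x : ℝ => x ^ (p/q)) z := by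
    intro z hz
    simp only [Function.comp, hg]
    rw [← Real.rpow_mul hz]
    congr 2
    field_simp
  dsimp only
  rw [heq x hx, heq y hy, heq _ (hconv.1 hx hy ha hb hab)]
  exact hcomp.2 hx hy ha hb hab
end

section
/- If f is p-radical convex and g is q-radical convex (p, q ≥ 1), then f + g is min{p,q}-radical convex. -/
open Set

lemma radical_aux (f : ℝ → ℝ) (p r : ℝ) (hr : 1 ≤ r) (hrp : r ≤ p)
    (hf0 : f 0 = 0) (hfnn : ∀ x ∈ Set.Ici (0:ℝ), 0 ≤ f x)
    (hconv : ConvexOn ℝ (Set.Ici 0) (fun x => f (x ^ (1/p)))) :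
    ConvexOn ℝ (Set.Ici 0) (fun x => f (x ^ (1/r))) := by
  have hr0 : (0:ℝ) < r := lt_of_lt_of_le one_pos hr
  have hp0 : (0:ℝ) < p := lt_of_lt_of_le hr0 hrp
  set h : ℝ → ℝ := fun x => f (x ^ (1/p)) with hh
  have hnn : ∀ x ∈ Set.Ici (0:ℝ), 0 ≤ h x := fun x hx =>
    hfnn _ (Real.rpow_nonneg hx _)
  have h0 : h 0 = 0 := by
    simp only [hh]
    rw [Real.zero_rpow (by positivity : (1:ℝ)/p ≠ 0), hf0]
  -- h is monotone on Ici 0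
  have hmono : MonotoneOn h (Set.Ici 0) := by
    intro a ha b hb hab
    rcases eq_or_lt_of_le hab with rfl | hab
    · exact le_rfl
    have hb0 : 0 < b := lt_of_le_of_lt ha hab
    have key := hconv.2 (Set.mem_Ici.mpr le_rfl) hb
      (show (0:ℝ) ≤ 1 - a/b by
        have : a/b ≤ 1 := (div_le_one hb0).mpr hab.le; linarith)
      (div_nonneg ha hb0.le)
      (show (1 - a/b) + a/b = 1 by ring)
    have hcomb : (1 - a/b) • (0:ℝ) + (a/b) • b = a := by
      rw [smul_zero, zero_add, smul_eq_mul, div_mul_cancel₀ a hb0.ne']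
    rw [hcomb] at key
    have hb' : 0 ≤ h b := hnn b hb
    calc h a ≤ (1 - a/b) * h 0 + (a/b) * h b := key
      _ = (a/b) * h b := by rw [h0]; ring
      _ ≤ 1 * h b := by
          apply mul_le_mul_of_nonneg_right _ hb'
          exact (div_le_one hb0).mpr hab.le
      _ = h b := one_mul _
  -- the power map
  have hpr : 1 ≤ p / r := (one_le_div hr0).mpr hrp
  have hφ : ConvexOn ℝ (Set.Ici 0) (fun x : ℝ => x ^ (p/r)) := convexOn_rpow hpr
  have himg : (fun x : ℝ => x ^ (p/r)) '' Set.Ici 0 = Set.Ici 0 := by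
    ext y
    constructor
    · rintro ⟨x, hx, rfl⟩; exact Real.rpow_nonneg hx _
    · intro hy
      refine ⟨y ^ (r/p), Real.rpow_nonneg hy _, ?_⟩
      show (y ^ (r/p)) ^ (p/r) = y
      rw [← Real.rpow_mul hy]
      rw [show r/p * (p/r) = 1 by field_simp]
      exact Real.rpow_one y
  have hcomp : ConvexOn ℝ (Set.Ici 0) (h ∘ fun x : ℝ => x ^ (p/r)) := by
    apply ConvexOn.comp
    · rw [himg]; exact hconv
    · exact hφ
    · rw [himg]; exact hmono
  have heq : ∀ x ∈ Set.Ici (0:ℝ), f (x ^ (1/r)) = (h ∘ fun x : ℝ => x ^ (p/r)) x := by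
    intro x hx
    simp only [Function.comp, hh]
    rw [← Real.rpow_mul hx]
    congr 2
    field_simp
  refine ⟨hcomp.1, ?_⟩
  intro x hx y hy a b ha hb hab
  show f ((a • x + b • y) ^ (1/r)) ≤ a • f (x ^ (1/r)) + b • f (y ^ (1/r))
  rw [heq x hx, heq y hy, heq _ (hcomp.1 hx hy ha hb hab)]
  exact hcomp.2 hx hy ha hb hab

theorem radical_convex_add (f g : ℝ → ℝ) (p q : ℝ) (hp : 1 ≤ p) (hq : 1 ≤ q)
    (hfmap : ∀ x ∈ Set.Ici (0:ℝ), 0 ≤ f x)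
    (hgmap : ∀ x ∈ Set.Ici (0:ℝ), 0 ≤ g x)
    (hfcont : ContinuousOn f (Set.Ici 0))
    (hgcont : ContinuousOn g (Set.Ici 0))
    (hf0 : f 0 = 0) (hg0 : g 0 = 0)
    (hfconv : ConvexOn ℝ (Set.Ici 0) (fun x => f (x ^ (1/p))))
    (hgconv : ConvexOn ℝ (Set.Ici 0) (fun x => g (x ^ (1/q)))) :
    ConvexOn ℝ (Set.Ici 0) (fun x => (f + g) (x ^ (1 / min p q))) := by
  have hr : 1 ≤ min p q := le_min hp hq
  have h1 := radical_aux f p (min p q) hr (min_le_left _ _) hf0 hfmap hfconv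
  have h2 := radical_aux g q (min p q) hr (min_le_right _ _) hg0 hgmap hgconv
  have := h1.add h2
  exact this
end

section
/- The function f(x) = e^x − 1 − x is 2-radical convex on [0,∞), i.e., x ↦ e^(√x) − 1 − √x is convex on [0,∞). -/
open Real Set

lemma expRest_hasSum (t : ℝ) :
    HasSum (fun n : ℕ => t ^ (n + 2) / ((Nat.factorial (n + 2)) : ℝ)) (Real.exp t - 1 - t) := by
  have h : HasSum (fun n : ℕ => t ^ n / (Nat.factorial n : ℝ)) (Real.exp t) := by
    rw [Real.exp_eq_exp_ℝ]
    exact NormedSpace.expSeries_div_hasSum_exp t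
  have h2 := (hasSum_nat_add_iff' (f := fun n : ℕ => t ^ n / (Nat.factorial n : ℝ)) 2).mpr h
  simpa [Finset.sum_range_succ, sub_sub] using h2

lemma expRest_eq (t : ℝ) :
    Real.exp t - 1 - t = ∑' n : ℕ, t ^ (n + 2) / ((Nat.factorial (n + 2)) : ℝ) :=
  (expRest_hasSum t).tsum_eq.symm

lemma sqrt_pow_eq_rpow {x : ℝ} (hx : 0 ≤ x) (n : ℕ) :
    Real.sqrt x ^ n = x ^ ((n : ℝ) / 2) := by
  rw [Real.sqrt_eq_rpow, ← Real.rpow_natCast (x ^ (1/2 : ℝ)) n, ← Real.rpow_mul hx]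
  ring_nf

theorem exp_sub_one_sub_id_two_radical_convex :
    ConvexOn ℝ (Set.Ici 0) (fun x => Real.exp (Real.sqrt x) - 1 - Real.sqrt x) := by
  refine ⟨convex_Ici 0, ?_⟩
  intro x hx y hy a b ha hb hab
  simp only [smul_eq_mul]
  have hx : (0:ℝ) ≤ x := hx
  have hy : (0:ℝ) ≤ y := hy
  have hz : (0:ℝ) ≤ a * x + b * y := by positivity
  rw [expRest_eq, expRest_eq, expRest_eq]
  have hterm : ∀ n : ℕ, (Real.sqrt (a * x + b * y)) ^ (n + 2) / ((Nat.factorial (n + 2)) : ℝ) ≤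
      a * (Real.sqrt x ^ (n + 2) / ((Nat.factorial (n + 2)) : ℝ)) + b * (Real.sqrt y ^ (n + 2) / ((Nat.factorial (n + 2)) : ℝ)) := by
    intro n
    rw [sqrt_pow_eq_rpow hx, sqrt_pow_eq_rpow hy, sqrt_pow_eq_rpow hz]
    have hp : (1:ℝ) ≤ ((n + 2 : ℕ) : ℝ) / 2 := by
      push_cast; linarith [Nat.cast_nonneg (α := ℝ) n]
    have := (convexOn_rpow hp).2 hx hy ha hb hab
    simp only [smul_eq_mul] at this
    rw [div_le_iff₀ (by positivity), add_mul]
    calc (a * x + b * y) ^ (((n+2:ℕ):ℝ) / 2) ≤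
        a * x ^ (((n+2:ℕ):ℝ) / 2) + b * y ^ (((n+2:ℕ):ℝ) / 2) := this
      _ = a * (x ^ (((n+2:ℕ):ℝ) / 2) / ((Nat.factorial (n + 2)) : ℝ)) * ((Nat.factorial (n + 2)) : ℝ) +
          b * (y ^ (((n+2:ℕ):ℝ) / 2) / ((Nat.factorial (n + 2)) : ℝ)) * ((Nat.factorial (n + 2)) : ℝ) := by
        field_simp
  have hsumz := (expRest_hasSum (Real.sqrt (a * x + b * y))).summable
  have hsumx := (expRest_hasSum (Real.sqrt x)).summable
  have hsumy := (expRest_hasSum (Real.sqrt y)).summable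
  calc ∑' n : ℕ, Real.sqrt (a * x + b * y) ^ (n + 2) / ((Nat.factorial (n + 2)) : ℝ)
      ≤ ∑' n : ℕ, (a * (Real.sqrt x ^ (n + 2) / ((Nat.factorial (n + 2)) : ℝ)) +
          b * (Real.sqrt y ^ (n + 2) / ((Nat.factorial (n + 2)) : ℝ))) :=
        Summable.tsum_le_tsum hterm hsumz ((hsumx.mul_left a).add (hsumy.mul_left b))
    _ = a * (∑' n : ℕ, Real.sqrt x ^ (n + 2) / ((Nat.factorial (n + 2)) : ℝ)) +
        b * (∑' n : ℕ, Real.sqrt y ^ (n + 2) / ((Nat.factorial (n + 2)) : ℝ)) := by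
        rw [Summable.tsum_add (hsumx.mul_left a) (hsumy.mul_left b), tsum_mul_left, tsum_mul_left]
end

section
/- If f is 2-radical convex, then for all a, b ≥ 0 and t ∈ [0,1]: f((1−t)a + tb) + f(√(t(1−t)) |a − b|) ≤ (1−t) f(a) + t f(b). -/
theorem two_radical_convex_refinement (f : ℝ → ℝ)
    (hmap : ∀ x ∈ Set.Ici (0:ℝ), 0 ≤ f x)
    (hcont : ContinuousOn f (Set.Ici 0))
    (hf0 : f 0 = 0)
    (hconv : ConvexOn ℝ (Set.Ici 0) (fun x => f (Real.sqrt x)))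
    (a b : ℝ) (ha : 0 ≤ a) (hb : 0 ≤ b) (t : ℝ) (ht : t ∈ Set.Icc (0:ℝ) 1) :
    f ((1 - t) * a + t * b) + f (Real.sqrt (t * (1 - t)) * |a - b|)
      ≤ (1 - t) * f a + t * f b := by
  obtain ⟨ht0, ht1⟩ := ht
  set g : ℝ → ℝ := fun x => f (Real.sqrt x) with hg
  have hg0 : g 0 = 0 := by simp [hg, hf0]
  have htt : 0 ≤ t * (1 - t) := mul_nonneg ht0 (by linarith)
  -- superadditivity of g
  have key : ∀ u v : ℝ, 0 ≤ u → 0 ≤ v → g u + g v ≤ g (u + v) := by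
    intro u v hu hv
    rcases eq_or_lt_of_le (add_nonneg hu hv) with hs | hs
    · have hu0 : u = 0 := by linarith [hu, hv, hs.symm ▸ (le_refl (u+v))]
      have hv0 : v = 0 := by linarith
      simp [hu0, hv0, hg0]
    · set s := u + v with hsdef
      have h1 : g u ≤ (u / s) * g s := by
        have := hconv.2 (Set.mem_Ici.mpr (le_of_lt hs)) (Set.mem_Ici.mpr le_rfl)
          (div_nonneg hu hs.le) (div_nonneg hv hs.le)
          (by field_simp; try linarith)
        have harg : u / s * s + v / s * 0 = u := by field_simp; ring
        simp only [smul_eq_mul] at this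
        rw [harg] at this
        simpa [hg0] using this
      have h2 : g v ≤ (v / s) * g s := by
        have := hconv.2 (Set.mem_Ici.mpr (le_of_lt hs)) (Set.mem_Ici.mpr le_rfl)
          (div_nonneg hv hs.le) (div_nonneg hu hs.le)
          (by field_simp; try linarith)
        have harg : v / s * s + u / s * 0 = v := by field_simp; ring
        simp only [smul_eq_mul] at this
        rw [harg] at this
        simpa [hg0] using this
      have : g u + g v ≤ (u / s) * g s + (v / s) * g s := add_le_add h1 h2
      have hsum : (u / s) * g s + (v / s) * g s = g s := by
        field_simp
        ring
      linarith [hsum ▸ this]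
  set c := (1 - t) * a + t * b with hc
  set d := Real.sqrt (t * (1 - t)) * |a - b| with hd
  have hcn : 0 ≤ c := add_nonneg (mul_nonneg (by linarith) ha) (mul_nonneg ht0 hb)
  have hdn : 0 ≤ d := mul_nonneg (Real.sqrt_nonneg _) (abs_nonneg _)
  have hfc : f c = g (c ^ 2) := by rw [hg]; simp [Real.sqrt_sq hcn]
  have hfd : f d = g (d ^ 2) := by rw [hg]; simp [Real.sqrt_sq hdn]
  have hfa : f a = g (a ^ 2) := by rw [hg]; simp [Real.sqrt_sq ha]
  have hfb : f b = g (b ^ 2) := by rw [hg]; simp [Real.sqrt_sq hb]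
  have hid : c ^ 2 + d ^ 2 = (1 - t) * a ^ 2 + t * b ^ 2 := by
    have hdsq : d ^ 2 = t * (1 - t) * (a - b) ^ 2 := by
      rw [hd, mul_pow, Real.sq_sqrt htt, sq_abs]
    rw [hdsq, hc]; ring
  have h1 : g (c ^ 2) + g (d ^ 2) ≤ g (c ^ 2 + d ^ 2) :=
    key _ _ (sq_nonneg c) (sq_nonneg d)
  have h2 : g ((1 - t) * a ^ 2 + t * b ^ 2) ≤ (1 - t) * g (a ^ 2) + t * g (b ^ 2) := by
    have := hconv.2 (Set.mem_Ici.mpr (sq_nonneg a)) (Set.mem_Ici.mpr (sq_nonneg b))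
      (by linarith : (0:ℝ) ≤ 1 - t) ht0 (by ring)
    simpa using this
  rw [hfc, hfd, hfa, hfb]
  rw [hid] at h1
  linarith
end

section
/- If f is 2-radical convex, then for all a, b ≥ 0: f((a+b)/2) + f(|a−b|/2) ≤ (f(a) + f(b))/2. -/
theorem two_radical_convex_midpoint (f : ℝ → ℝ)
    (hmap : ∀ x ∈ Set.Ici (0:ℝ), 0 ≤ f x)
    (hcont : ContinuousOn f (Set.Ici 0))
    (hf0 : f 0 = 0)
    (hconv : ConvexOn ℝ (Set.Ici 0) (fun x => f (Real.sqrt x)))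
    (a b : ℝ) (ha : 0 ≤ a) (hb : 0 ≤ b) :
    f ((a + b) / 2) + f (|a - b| / 2) ≤ (f a + f b) / 2 := by
  set g : ℝ → ℝ := fun x => f (Real.sqrt x) with hg
  have hg0 : g 0 = 0 := by simp [hg, hf0]
  -- superadditivity of g
  have super : ∀ u v : ℝ, 0 ≤ u → 0 ≤ v → g u + g v ≤ g (u + v) := by
    have key : ∀ u v : ℝ, 0 ≤ u → 0 ≤ v → 0 < u + v → g u ≤ (u / (u + v)) * g (u + v) := by
      intro u v hu hv hs
      have := hconv.2 (Set.mem_Ici.2 hs.le) (Set.mem_Ici.2 le_rfl)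
        (div_nonneg hu hs.le) (div_nonneg hv hs.le)
        (by field_simp)
      have heq : (u / (u + v)) • (u + v) + (v / (u + v)) • (0:ℝ) = u := by
        rw [smul_eq_mul, smul_eq_mul, mul_zero, add_zero, div_mul_cancel₀ u hs.ne']
      rw [heq] at this
      simpa [hg0, smul_eq_mul] using this
    intro u v hu hv
    rcases eq_or_lt_of_le (add_nonneg hu hv) with h | h
    · have hu0 : u = 0 := by nlinarith
      have hv0 : v = 0 := by nlinarith
      simp [hu0, hv0, hg0]
    · have h1 := key u v hu hv h
      have h2 := key v u hv hu (by linarith)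
      rw [add_comm v u] at h2
      have : g u + g v ≤ (u / (u + v)) * g (u + v) + (v / (u + v)) * g (u + v) :=
        add_le_add h1 h2
      calc g u + g v ≤ (u / (u + v)) * g (u + v) + (v / (u + v)) * g (u + v) := this
        _ = g (u + v) := by field_simp
  have hab : (0:ℝ) ≤ (a + b) / 2 := by linarith
  have habs : (0:ℝ) ≤ |a - b| / 2 := by positivity
  have e1 : f ((a + b) / 2) = g (((a + b) / 2) ^ 2) := by
    rw [hg]; simp [Real.sqrt_sq hab]
  have e2 : f (|a - b| / 2) = g ((|a - b| / 2) ^ 2) := by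
    rw [hg]; simp [Real.sqrt_sq habs]
  have e3 : f a = g (a ^ 2) := by rw [hg]; simp [Real.sqrt_sq ha]
  have e4 : f b = g (b ^ 2) := by rw [hg]; simp [Real.sqrt_sq hb]
  have hsum : ((a + b) / 2) ^ 2 + (|a - b| / 2) ^ 2 = (a ^ 2 + b ^ 2) / 2 := by
    have : |a - b| ^ 2 = (a - b) ^ 2 := sq_abs _
    nlinarith [this]
  have step1 : g (((a + b) / 2) ^ 2) + g ((|a - b| / 2) ^ 2) ≤ g ((a ^ 2 + b ^ 2) / 2) := by
    rw [← hsum]; exact super _ _ (by positivity) (by positivity)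
  have step2 : g ((a ^ 2 + b ^ 2) / 2) ≤ (g (a ^ 2) + g (b ^ 2)) / 2 := by
    have := hconv.2 (Set.mem_Ici.2 (by positivity : (0:ℝ) ≤ a ^ 2))
      (Set.mem_Ici.2 (by positivity : (0:ℝ) ≤ b ^ 2))
      (by norm_num : (0:ℝ) ≤ 1/2) (by norm_num : (0:ℝ) ≤ 1/2) (by norm_num)
    have heq : (1/2 : ℝ) • (a ^ 2) + (1/2 : ℝ) • (b ^ 2) = (a ^ 2 + b ^ 2) / 2 := by
      simp [smul_eq_mul]; ring
    rw [heq] at this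
    convert this using 1
    case e'_2 => rfl
    case e'_4 => simp only [smul_eq_mul]; ring
  rw [e1, e2, e3, e4]
  linarith
end

section
/- If f is 2-radical convex, then for t ∈ [0,1]: f(t) ≤ f(1)·t − f(√(t(1−t))) ≤ f(1)·t. -/
theorem two_radical_convex_bound (f : ℝ → ℝ)
    (hmap : ∀ x ∈ Set.Ici (0:ℝ), 0 ≤ f x)
    (hcont : ContinuousOn f (Set.Ici 0))
    (hf0 : f 0 = 0)
    (hconv : ConvexOn ℝ (Set.Ici 0) (fun x => f (Real.sqrt x)))
    (t : ℝ) (ht : t ∈ Set.Icc (0:ℝ) 1) :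
    f t ≤ f 1 * t - f (Real.sqrt (t * (1 - t))) ∧
    f 1 * t - f (Real.sqrt (t * (1 - t))) ≤ f 1 * t := by
  obtain ⟨ht0, ht1⟩ := ht
  have hfb : 0 ≤ f (Real.sqrt (t * (1 - t))) := hmap _ (Real.sqrt_nonneg _)
  refine ⟨?_, by linarith⟩
  rcases eq_or_lt_of_le ht0 with h | h
  · simp [← h, hf0, Real.sqrt_zero]
  · set g := fun x => f (Real.sqrt x) with hg
    have hg0 : g 0 = 0 := by simp [hg, hf0]
    have key : ∀ a : ℝ, 0 ≤ a → a ≤ t → g a ≤ (a / t) * g t := by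
      intro a ha hat
      have h1 : g ((a / t) • t + ((t - a) / t) • (0:ℝ)) ≤
          (a / t) • g t + ((t - a) / t) • g 0 :=
        hconv.2 (Set.mem_Ici.2 h.le) (Set.mem_Ici.2 le_rfl)
          (div_nonneg ha h.le) (div_nonneg (by linarith) h.le)
          (by field_simp; ring)
      have h2 : (a / t) • t + ((t - a) / t) • (0:ℝ) = a := by rw [smul_eq_mul, smul_eq_mul, mul_zero, add_zero, div_mul_cancel₀ a h.ne']
      rw [h2] at h1
      simpa [hg0] using h1
    have k1 : g (t * t) ≤ (t * t / t) * g t :=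
      key _ (mul_nonneg ht0 ht0) (by nlinarith)
    have k2 : g (t * (1 - t)) ≤ (t * (1 - t) / t) * g t :=
      key _ (mul_nonneg ht0 (by linarith)) (by nlinarith)
    have c1 : t * t / t = t := by field_simp
    have c2 : t * (1 - t) / t = 1 - t := by field_simp
    rw [c1] at k1
    rw [c2] at k2
    have ksum : g (t * t) + g (t * (1 - t)) ≤ g t := by nlinarith [k1, k2]
    have k3 : g t ≤ t * g 1 := by
      have h1 : g (t • (1:ℝ) + (1 - t) • (0:ℝ)) ≤ t • g 1 + (1 - t) • g 0 :=
        hconv.2 (Set.mem_Ici.2 zero_le_one) (Set.mem_Ici.2 le_rfl)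
          ht0 (by linarith) (by ring)
      have h2 : t • (1:ℝ) + (1 - t) • (0:ℝ) = t := by simp
      rw [h2] at h1
      simpa [hg0] using h1
    have e1 : g (t * t) = f t := by simp [hg, Real.sqrt_mul_self ht0]
    have e2 : g 1 = f 1 := by simp [hg]
    have e3 : g (t * (1 - t)) = f (Real.sqrt (t * (1 - t))) := rfl
    rw [e1, e3] at ksum
    rw [e2] at k3
    linarith
end

section
/- Let f be 2-radical convex, x₁,…,xₙ ≥ 0, and w₁,…,wₙ ∈ [0,1] with ∑ wᵢ = 1. Then f(∑ wᵢ xᵢ) ≤ ∑ᵢ wᵢ [ f((∑ⱼ wⱼ xⱼ + xᵢ)/2) + f(|∑ⱼ wⱼ xⱼ − xᵢ|/2) ] ≤ ∑ᵢ wᵢ f(xᵢ). -/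
open Finset

lemma aux_mono {g : ℝ → ℝ} (hconv : ConvexOn ℝ (Set.Ici 0) g)
    (hg0 : g 0 = 0) (hgpos : ∀ x, 0 ≤ x → 0 ≤ g x) :
    ∀ a b : ℝ, 0 ≤ a → a ≤ b → g a ≤ g b := by
  intro a b ha hab
  rcases eq_or_lt_of_le (ha.trans hab) with hb | hb
  · have ha0 : a = 0 := le_antisymm (hab.trans hb.symm.le) ha
    simp [ha0, ← hb]
  · have ht0 : (0:ℝ) ≤ a / b := div_nonneg ha hb.le
    have ht1 : a / b ≤ 1 := div_le_one_of_le₀ hab hb.le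
    have h := hconv.2 (Set.mem_Ici.2 (ha.trans hab)) (Set.mem_Ici.2 le_rfl)
      ht0 (by linarith : (0:ℝ) ≤ 1 - a / b) (by ring)
    simp only [smul_eq_mul, mul_zero, add_zero, hg0] at h
    have hab' : a / b * b = a := div_mul_cancel₀ a hb.ne'
    rw [hab'] at h
    have hgb : 0 ≤ g b := hgpos b (ha.trans hab)
    nlinarith

lemma aux_superadd {g : ℝ → ℝ} (hconv : ConvexOn ℝ (Set.Ici 0) g)
    (hg0 : g 0 = 0) :
    ∀ a b : ℝ, 0 ≤ a → 0 ≤ b → g a + g b ≤ g (a + b) := by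
  intro a b ha hb
  rcases eq_or_lt_of_le (add_nonneg ha hb) with hs | hs
  · have ha0 : a = 0 := by linarith
    have hb0 : b = 0 := by linarith
    simp [ha0, hb0, hg0]
  · have hsmem : (a + b) ∈ Set.Ici (0:ℝ) := le_of_lt hs
    have h0mem : (0:ℝ) ∈ Set.Ici (0:ℝ) := Set.self_mem_Ici
    have h1 := hconv.2 hsmem h0mem (div_nonneg ha hs.le)
      (by positivity : (0:ℝ) ≤ b / (a + b)) (by field_simp)
    have h2 := hconv.2 hsmem h0mem (div_nonneg hb hs.le)
      (by positivity : (0:ℝ) ≤ a / (a + b)) (by field_simp; ring)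
    simp only [smul_eq_mul, mul_zero, add_zero, hg0] at h1 h2
    rw [div_mul_cancel₀ a hs.ne'] at h1
    rw [div_mul_cancel₀ b hs.ne'] at h2
    have hcomb : a / (a + b) * g (a + b) + b / (a + b) * g (a + b) = g (a + b) := by
      field_simp
    linarith

theorem two_radical_convex_jensen (f : ℝ → ℝ)
    (hmap : ∀ x ∈ Set.Ici (0:ℝ), 0 ≤ f x)
    (hcont : ContinuousOn f (Set.Ici 0))
    (hf0 : f 0 = 0)
    (hconv : ConvexOn ℝ (Set.Ici 0) (fun x => f (Real.sqrt x)))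
    (n : ℕ) (x w : Fin n → ℝ)
    (hx : ∀ i, 0 ≤ x i) (hw : ∀ i, w i ∈ Set.Icc (0:ℝ) 1)
    (hsum : ∑ i, w i = 1) :
    f (∑ i, w i * x i)
      ≤ ∑ i, w i * (f ((∑ j, w j * x j + x i) / 2) + f (|∑ j, w j * x j - x i| / 2)) ∧
    ∑ i, w i * (f ((∑ j, w j * x j + x i) / 2) + f (|∑ j, w j * x j - x i| / 2))
      ≤ ∑ i, w i * f (x i) := by
  set g : ℝ → ℝ := fun x => f (Real.sqrt x) with hg
  have hg0 : g 0 = 0 := by simp [hg, hf0]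
  have hgpos : ∀ t, 0 ≤ t → 0 ≤ g t := fun t ht =>
    hmap _ (Set.mem_Ici.2 (Real.sqrt_nonneg t))
  have hmono := aux_mono hconv hg0 hgpos
  have hsup := aux_superadd hconv hg0
  have hfg : ∀ t : ℝ, 0 ≤ t → f t = g (t ^ 2) := by
    intro t ht
    simp [hg, Real.sqrt_sq ht]
  set m : ℝ := ∑ i, w i * x i with hm
  have hwpos : ∀ i, 0 ≤ w i := fun i => (hw i).1
  have hm0 : 0 ≤ m := Finset.sum_nonneg fun i _ => mul_nonneg (hwpos i) (hx i)
  -- Jensen for squares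
  have hJ2 : ∀ z : Fin n → ℝ, (∑ i, w i * z i) ^ 2 ≤ ∑ i, w i * z i ^ 2 := by
    intro z
    have hc : ConvexOn ℝ Set.univ (fun t : ℝ => t ^ 2) := even_two.convexOn_pow
    have := hc.map_sum_le (t := Finset.univ) (w := w) (p := z)
      (fun i _ => hwpos i) hsum (fun i _ => Set.mem_univ _)
    simpa [smul_eq_mul] using this
  -- Jensen for g
  have hJg : ∀ z : Fin n → ℝ, (∀ i, 0 ≤ z i) →
      g (∑ i, w i * z i) ≤ ∑ i, w i * g (z i) := by
    intro z hz
    have := hconv.map_sum_le (t := Finset.univ) (w := w) (p := z)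
      (fun i _ => hwpos i) hsum (fun i _ => Set.mem_Ici.2 (hz i))
    simpa [smul_eq_mul] using this
  -- notation
  set y : Fin n → ℝ := fun i => (m + x i) / 2 with hy
  set z : Fin n → ℝ := fun i => |m - x i| / 2 with hz
  have hy0 : ∀ i, 0 ≤ y i := fun i => div_nonneg (add_nonneg hm0 (hx i)) (by norm_num)
  have hz0 : ∀ i, 0 ≤ z i := fun i => div_nonneg (abs_nonneg _) (by norm_num)
  -- f m ≤ ∑ w i f (x i)
  have hfm : f m ≤ ∑ i, w i * f (x i) := by
    rw [hfg m hm0]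
    calc g (m ^ 2) ≤ g (∑ i, w i * x i ^ 2) := hmono _ _ (sq_nonneg m) (hJ2 x)
      _ = g (∑ i, w i * (fun i => x i ^ 2) i) := rfl
      _ ≤ ∑ i, w i * g (x i ^ 2) := hJg _ (fun i => by positivity)
      _ = ∑ i, w i * f (x i) := by
          apply Finset.sum_congr rfl
          intro i _
          rw [hfg (x i) (hx i)]
  constructor
  · -- first inequality
    have h1 : f m ≤ ∑ i, w i * f (y i) := by
      have hmy : m = ∑ i, w i * y i := by
        simp only [hy]
        have step : ∑ i, w i * ((m + x i) / 2)
            = (∑ i, w i * m) / 2 + (∑ i, w i * x i) / 2 := by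
          rw [Finset.sum_div, Finset.sum_div, ← Finset.sum_add_distrib]
          apply Finset.sum_congr rfl
          intro i _
          ring
        rw [step, ← Finset.sum_mul, hsum, one_mul, ← hm]
        ring
      rw [hfg m hm0]
      calc g (m ^ 2) = g ((∑ i, w i * y i) ^ 2) := by rw [← hmy]
        _ ≤ g (∑ i, w i * y i ^ 2) := hmono _ _ (sq_nonneg _) (hJ2 y)
        _ = g (∑ i, w i * (fun i => y i ^ 2) i) := rfl
        _ ≤ ∑ i, w i * g (y i ^ 2) := hJg _ (fun i => by positivity)
        _ = ∑ i, w i * f (y i) := by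
            apply Finset.sum_congr rfl
            intro i _
            rw [hfg (y i) (hy0 i)]
    refine h1.trans (Finset.sum_le_sum fun i _ => ?_)
    have hfz : 0 ≤ f (z i) := hmap _ (Set.mem_Ici.2 (hz0 i))
    have := hwpos i
    nlinarith
  · -- second inequality
    have key : ∀ i, f (y i) + f (z i) ≤ (f m + f (x i)) / 2 := by
      intro i
      rw [hfg (y i) (hy0 i), hfg (z i) (hz0 i), hfg m hm0, hfg (x i) (hx i)]
      have hsum2 : y i ^ 2 + z i ^ 2 = (m ^ 2 + x i ^ 2) / 2 := by
        simp only [hy, hz]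
        rw [div_pow, div_pow, sq_abs]
        ring
      have h1 : g (y i ^ 2) + g (z i ^ 2) ≤ g ((m ^ 2 + x i ^ 2) / 2) := by
        rw [← hsum2]
        exact hsup _ _ (by positivity) (by positivity)
      have h2 : g ((m ^ 2 + x i ^ 2) / 2) ≤ (g (m ^ 2) + g (x i ^ 2)) / 2 := by
        have := hconv.2 (Set.mem_Ici.2 (by positivity : (0:ℝ) ≤ m ^ 2))
          (Set.mem_Ici.2 (by positivity : (0:ℝ) ≤ x i ^ 2))
          (by norm_num : (0:ℝ) ≤ 1/2) (by norm_num : (0:ℝ) ≤ 1/2) (by norm_num)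
        simp only [smul_eq_mul] at this
        calc g ((m ^ 2 + x i ^ 2) / 2) = g (1/2 * m ^ 2 + 1/2 * x i ^ 2) := by ring_nf
          _ ≤ 1/2 * g (m ^ 2) + 1/2 * g (x i ^ 2) := this
          _ = (g (m ^ 2) + g (x i ^ 2)) / 2 := by ring
      linarith
    calc ∑ i, w i * (f (y i) + f (z i))
        ≤ ∑ i, w i * ((f m + f (x i)) / 2) :=
          Finset.sum_le_sum fun i _ => mul_le_mul_of_nonneg_left (key i) (hwpos i)
      _ = (f m + ∑ i, w i * f (x i)) / 2 := by
          have step : ∑ i, w i * ((f m + f (x i)) / 2)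
              = (∑ i, w i * f m) / 2 + (∑ i, w i * f (x i)) / 2 := by
            rw [Finset.sum_div, Finset.sum_div, ← Finset.sum_add_distrib]
            apply Finset.sum_congr rfl
            intro i _
            ring
          rw [step, ← Finset.sum_mul, hsum, one_mul]
          ring
      _ ≤ ∑ i, w i * f (x i) := by linarith
end

section
/- If f is 2-radical convex, then for all a, b ≥ 0: f(a) + f(b) + f(√(2ab)) ≤ f(a + b). -/
lemma convex_superadd (g : ℝ → ℝ) (hconv : ConvexOn ℝ (Set.Ici 0) g)
    (hg0 : g 0 = 0) {x y : ℝ} (hx : 0 ≤ x) (hy : 0 ≤ y) :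
    g x + g y ≤ g (x + y) := by
  rcases eq_or_lt_of_le (add_nonneg hx hy) with hs | hs
  · have hx0 : x = 0 := by linarith
    have hy0 : y = 0 := by linarith
    simp [hx0, hy0, hg0]
  · set s := x + y with hsdef
    have hxs : x / s + y / s = 1 := by field_simp; exact hsdef.symm
    have h1 : g x ≤ (x / s) * g s := by
      have := hconv.2 (Set.mem_Ici.2 (le_of_lt hs)) (Set.mem_Ici.2 le_rfl)
        (div_nonneg hx hs.le) (div_nonneg hy hs.le) hxs
      have hxe : x / s * s + y / s * 0 = x := by field_simp; ring
      rw [smul_eq_mul, smul_eq_mul, smul_eq_mul, smul_eq_mul, hxe, hg0] at this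
      linarith
    have h2 : g y ≤ (y / s) * g s := by
      have hys : y / s + x / s = 1 := by linarith
      have := hconv.2 (Set.mem_Ici.2 (le_of_lt hs)) (Set.mem_Ici.2 le_rfl)
        (div_nonneg hy hs.le) (div_nonneg hx hs.le) hys
      have hye : y / s * s + x / s * 0 = y := by field_simp; ring
      rw [smul_eq_mul, smul_eq_mul, smul_eq_mul, smul_eq_mul, hye, hg0] at this
      linarith
    have : (x / s) * g s + (y / s) * g s = g s := by
      rw [← add_mul, hxs, one_mul]
    linarith

theorem two_radical_convex_superadditive (f : ℝ → ℝ)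
    (hmap : ∀ x ∈ Set.Ici (0:ℝ), 0 ≤ f x)
    (hcont : ContinuousOn f (Set.Ici 0))
    (hf0 : f 0 = 0)
    (hconv : ConvexOn ℝ (Set.Ici 0) (fun x => f (Real.sqrt x)))
    (a b : ℝ) (ha : 0 ≤ a) (hb : 0 ≤ b) :
    f a + f b + f (Real.sqrt (2 * a * b)) ≤ f (a + b) := by
  set g : ℝ → ℝ := fun x => f (Real.sqrt x) with hg
  have hg0 : g 0 = 0 := by simp [hg, hf0]
  have hab : (0:ℝ) ≤ 2 * a * b := by positivity
  have e1 : f a = g (a ^ 2) := by simp [hg, Real.sqrt_sq ha]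
  have e2 : f b = g (b ^ 2) := by simp [hg, Real.sqrt_sq hb]
  have e3 : f (Real.sqrt (2 * a * b)) = g (2 * a * b) := rfl
  have e4 : f (a + b) = g (a ^ 2 + b ^ 2 + 2 * a * b) := by
    have : a ^ 2 + b ^ 2 + 2 * a * b = (a + b) ^ 2 := by ring
    simp [hg, this, Real.sqrt_sq (add_nonneg ha hb)]
  rw [e1, e2, e3, e4]
  have h1 : g (a ^ 2) + g (b ^ 2) ≤ g (a ^ 2 + b ^ 2) :=
    convex_superadd g hconv hg0 (sq_nonneg a) (sq_nonneg b)
  have h2 : g (a ^ 2 + b ^ 2) + g (2 * a * b) ≤ g (a ^ 2 + b ^ 2 + 2 * a * b) :=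
    convex_superadd g hconv hg0 (by positivity) hab
  linarith
end

section
/- If f is 2-radical convex and b > a > 0, then f((a+b)/2) + (2/(b−a)) ∫₀^{(b−a)/2} f(x) dx ≤ (1/(b−a)) ∫ₐᵇ f(x) dx. -/
lemma g_superadd {g : ℝ → ℝ} (hconv : ConvexOn ℝ (Set.Ici 0) g)
    (hg0 : g 0 = 0) (u v : ℝ) (hu : 0 ≤ u) (hv : 0 ≤ v) :
    g u + g v ≤ g (u + v) := by
  rcases eq_or_lt_of_le (add_nonneg hu hv) with hs | hs
  · have hu0 : u = 0 := by linarith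
    have hv0 : v = 0 := by linarith
    simp [hu0, hv0, hg0]
  · have hmems : (u + v) ∈ Set.Ici (0:ℝ) := le_of_lt hs
    have hmem0 : (0:ℝ) ∈ Set.Ici (0:ℝ) := Set.self_mem_Ici
    have hne : u + v ≠ 0 := ne_of_gt hs
    have h1 := hconv.2 hmems hmem0 (div_nonneg hu hs.le) (div_nonneg hv hs.le)
      (by field_simp)
    have h2 := hconv.2 hmems hmem0 (div_nonneg hv hs.le) (div_nonneg hu hs.le)
      (by field_simp; ring)
    simp only [smul_eq_mul, mul_zero, add_zero, hg0] at h1 h2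
    rw [div_mul_cancel₀ _ hne] at h1 h2
    have hsum : u / (u + v) + v / (u + v) = 1 := by field_simp
    have hc : u / (u + v) * g (u + v) + v / (u + v) * g (u + v) = g (u + v) := by
      rw [← add_mul, hsum, one_mul]
    linarith

lemma pointwise_key (f : ℝ → ℝ)
    (hmap : ∀ x ∈ Set.Ici (0:ℝ), 0 ≤ f x)
    (hf0 : f 0 = 0)
    (hconv : ConvexOn ℝ (Set.Ici 0) (fun x => f (Real.sqrt x)))
    (m t : ℝ) (ht : 0 ≤ t) (htm : t ≤ m) :
    2 * f m + 2 * f t ≤ f (m + t) + f (m - t) := by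
  set g : ℝ → ℝ := fun x => f (Real.sqrt x) with hg
  have hm : 0 ≤ m := le_trans ht htm
  have hg0 : g 0 = 0 := by simp [hg, Real.sqrt_zero, hf0]
  have hfg : ∀ x : ℝ, 0 ≤ x → f x = g (x ^ 2) := by
    intro x hx
    simp [hg, Real.sqrt_sq hx]
  have hsup := g_superadd hconv hg0 (m ^ 2) (t ^ 2) (sq_nonneg m) (sq_nonneg t)
  -- midpoint convexity
  have hA : ((m + t) ^ 2 : ℝ) ∈ Set.Ici (0:ℝ) := Set.mem_Ici.mpr (sq_nonneg _)
  have hB : ((m - t) ^ 2 : ℝ) ∈ Set.Ici (0:ℝ) := Set.mem_Ici.mpr (sq_nonneg _)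
  have hmid := hconv.2 hA hB (by norm_num : (0:ℝ) ≤ 1/2) (by norm_num : (0:ℝ) ≤ 1/2)
    (by norm_num)
  simp only [smul_eq_mul] at hmid
  have hmt : (1/2 : ℝ) * (m + t) ^ 2 + (1/2 : ℝ) * (m - t) ^ 2 = m ^ 2 + t ^ 2 := by ring
  rw [hmt] at hmid
  have e1 : f m = g (m ^ 2) := hfg m hm
  have e2 : f t = g (t ^ 2) := hfg t ht
  have e3 : f (m + t) = g ((m + t) ^ 2) := hfg _ (by linarith)
  have e4 : f (m - t) = g ((m - t) ^ 2) := hfg _ (by linarith)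
  rw [e1, e2, e3, e4]
  have : g (m ^ 2 + t ^ 2) ≤ 1/2 * g ((m+t)^2) + 1/2 * g ((m-t)^2) := hmid
  linarith [hsup, this]

theorem two_radical_convex_HH_left (f : ℝ → ℝ)
    (hmap : ∀ x ∈ Set.Ici (0:ℝ), 0 ≤ f x)
    (hcont : ContinuousOn f (Set.Ici 0))
    (hf0 : f 0 = 0)
    (hconv : ConvexOn ℝ (Set.Ici 0) (fun x => f (Real.sqrt x)))
    (a b : ℝ) (ha : 0 < a) (hab : a < b) :
    f ((a + b) / 2) + (2 / (b - a)) * ∫ x in (0:ℝ)..((b - a) / 2), f x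
      ≤ (1 / (b - a)) * ∫ x in a..b, f x := by
  set m := (a + b) / 2 with hm
  set h := (b - a) / 2 with hh
  have hh0 : 0 < h := by rw [hh]; linarith
  have hhm : h < m := by rw [hh, hm]; linarith
  have hm0 : 0 < m := lt_trans hh0 hhm
  -- continuity / integrability
  have cadd : ContinuousOn (fun t : ℝ => f (m + t)) (Set.Ici (-h)) :=
    hcont.comp (continuous_const.add continuous_id).continuousOn
      (fun t ht => by simp only [Set.mem_Ici] at ht ⊢; linarith)
  have csub : ContinuousOn (fun t : ℝ => f (m - t)) (Set.Iic m) :=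
    hcont.comp (continuous_const.sub continuous_id).continuousOn
      (fun t ht => by simp only [Set.mem_Iic] at ht; simp only [Set.mem_Ici]; linarith)
  have int1 : IntervalIntegrable (fun t : ℝ => f (m + t)) MeasureTheory.volume (-h) 0 := by
    apply ContinuousOn.intervalIntegrable
    apply cadd.mono
    rw [Set.uIcc_of_le (by linarith : (-h:ℝ) ≤ 0)]
    exact fun x hx => hx.1
  have int2 : IntervalIntegrable (fun t : ℝ => f (m + t)) MeasureTheory.volume 0 h := by
    apply ContinuousOn.intervalIntegrable
    apply cadd.mono
    rw [Set.uIcc_of_le hh0.le]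
    exact fun x hx => by simp only [Set.mem_Ici]; linarith [hx.1]
  have int3 : IntervalIntegrable (fun t : ℝ => f (m - t)) MeasureTheory.volume 0 h := by
    apply ContinuousOn.intervalIntegrable
    apply csub.mono
    rw [Set.uIcc_of_le hh0.le]
    exact fun x hx => by simp only [Set.mem_Iic]; linarith [hx.2]
  have int4 : IntervalIntegrable f MeasureTheory.volume 0 h := by
    apply ContinuousOn.intervalIntegrable
    apply hcont.mono
    rw [Set.uIcc_of_le hh0.le]
    exact fun x hx => hx.1
  -- change of variables
  have e1 : (∫ t in (-h)..h, f (m + t)) = ∫ x in a..b, f x := by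
    rw [intervalIntegral.integral_comp_add_left f m]
    congr 1
    · rw [hm, hh]; ring
    · rw [hm, hh]; ring
  have e2 : (∫ t in (0:ℝ)..h, f (m - t)) = ∫ t in (-h)..0, f (m + t) := by
    have := intervalIntegral.integral_comp_neg (a := 0) (b := h) (fun t => f (m + t))
    simp only [sub_eq_add_neg, neg_zero] at this ⊢
    exact this
  have e3 : (∫ t in (-h)..0, f (m + t)) + (∫ t in (0:ℝ)..h, f (m + t))
      = ∫ t in (-h)..h, f (m + t) :=
    intervalIntegral.integral_add_adjacent_intervals int1 int2
  -- pointwise bound integrated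
  have key : (∫ t in (0:ℝ)..h, (2 * f m + 2 * f t))
      ≤ ∫ t in (0:ℝ)..h, (f (m + t) + f (m - t)) := by
    apply intervalIntegral.integral_mono_on hh0.le
    · exact (intervalIntegrable_const).add (int4.const_mul 2)
    · exact int2.add int3
    · intro t ht
      exact pointwise_key f hmap hf0 hconv m t ht.1 (le_trans ht.2 hhm.le)
  have lhs_eq : (∫ t in (0:ℝ)..h, (2 * f m + 2 * f t))
      = 2 * h * f m + 2 * ∫ t in (0:ℝ)..h, f t := by
    rw [intervalIntegral.integral_add intervalIntegrable_const (int4.const_mul 2),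
      intervalIntegral.integral_const, intervalIntegral.integral_const_mul]
    simp [smul_eq_mul]; ring
  have rhs_eq : (∫ t in (0:ℝ)..h, (f (m + t) + f (m - t))) = ∫ x in a..b, f x := by
    rw [intervalIntegral.integral_add int2 int3, e2, ← e1, ← e3]
    ring
  have main : 2 * h * f m + 2 * (∫ t in (0:ℝ)..h, f t) ≤ ∫ x in a..b, f x := by
    rw [← lhs_eq, ← rhs_eq]; exact key
  have hba : b - a = 2 * h := by rw [hh]; ring
  have hba0 : (0:ℝ) < b - a := by linarith
  rw [hba] at hba0 ⊢
  rw [div_mul_eq_mul_div, div_mul_eq_mul_div, ← sub_nonneg]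
  have : 1 * (∫ x in a..b, f x) / (2 * h) - (f m + 2 * (∫ t in (0:ℝ)..h, f t) / (2 * h))
      = ((∫ x in a..b, f x) - (2 * h * f m + 2 * (∫ t in (0:ℝ)..h, f t))) / (2 * h) := by
    field_simp
  rw [this]
  apply div_nonneg (by linarith) (by linarith)
end

section
/- If f is 2-radical convex and b > a > 0, then (1/(b−a)) ∫ₐᵇ f(x) dx + (1/(b−a)) ∫₀^{(b−a)/2} 4x f(x)/√((b−a)² − 4x²) dx ≤ (f(a) + f(b))/2. -/
open Real MeasureTheory Set intervalIntegral

theorem two_radical_convex_HH_right (f : ℝ → ℝ)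
    (hmap : ∀ x ∈ Set.Ici (0:ℝ), 0 ≤ f x)
    (hcont : ContinuousOn f (Set.Ici 0))
    (hf0 : f 0 = 0)
    (hconv : ConvexOn ℝ (Set.Ici 0) (fun x => f (Real.sqrt x)))
    (a b : ℝ) (ha : 0 < a) (hab : a < b) :
    (1 / (b - a)) * ∫ x in a..b, f x
      + (1 / (b - a)) * ∫ x in (0:ℝ)..((b - a) / 2),
          4 * x * f x / Real.sqrt ((b - a) ^ 2 - 4 * x ^ 2)
      ≤ (f a + f b) / 2 := by
  set c := b - a with hc
  have hc0 : 0 < c := by simp [hc]; linarith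
  set m := (a + b) / 2 with hm
  have hg0 : f (Real.sqrt 0) = 0 := by rw [Real.sqrt_zero, hf0]
  -- superadditivity of g = f ∘ sqrt
  have hsup : ∀ X Y : ℝ, 0 ≤ X → 0 ≤ Y →
      f (Real.sqrt X) + f (Real.sqrt Y) ≤ f (Real.sqrt (X + Y)) := by
    intro X Y hX hY
    rcases eq_or_lt_of_le (by linarith : (0:ℝ) ≤ X + Y) with h | h
    · have hX0 : X = 0 := by linarith
      have hY0 : Y = 0 := by linarith
      simp [hX0, hY0, hf0]
    · have hS : (X + Y) ∈ Set.Ici (0:ℝ) := le_of_lt h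
      have h0 : (0:ℝ) ∈ Set.Ici (0:ℝ) := Set.mem_Ici.mpr le_rfl
      have h1 := hconv.2 hS h0 (div_nonneg hX h.le) (div_nonneg hY h.le)
        (by field_simp)
      have h2 := hconv.2 hS h0 (div_nonneg hY h.le) (div_nonneg hX h.le)
        (by field_simp; ring)
      simp only [smul_eq_mul, mul_zero, hg0] at h1 h2
      rw [show X / (X + Y) * (X + Y) + 0 = X by field_simp; ring] at h1
      rw [show Y / (X + Y) * (X + Y) + 0 = Y by field_simp; ring] at h2
      have h4 : X / (X + Y) * f (Real.sqrt (X + Y)) + Y / (X + Y) * f (Real.sqrt (X + Y))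
          = f (Real.sqrt (X + Y)) := by
        field_simp
      linarith
  -- key pointwise inequality
  have key : ∀ θ : ℝ, 0 ≤ Real.sin θ →
      f (m - c / 2 * Real.cos θ) + f (c / 2 * Real.sin θ)
        ≤ (1 - Real.cos θ) / 2 * f b + (1 + Real.cos θ) / 2 * f a := by
    intro θ hs
    have hcos1 : Real.cos θ ≤ 1 := Real.cos_le_one θ
    have hcosm : -1 ≤ Real.cos θ := Real.neg_one_le_cos θ
    set u := m - c / 2 * Real.cos θ with hu
    set v := c / 2 * Real.sin θ with hv
    have hu0 : 0 ≤ u := by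
      have : a ≤ u := by rw [hu, hm, hc]; nlinarith
      linarith
    have hv0 : 0 ≤ v := by positivity
    have hfu : f u = f (Real.sqrt (u ^ 2)) := by rw [Real.sqrt_sq hu0]
    have hfv : f v = f (Real.sqrt (v ^ 2)) := by rw [Real.sqrt_sq hv0]
    have hfa : f a = f (Real.sqrt (a ^ 2)) := by rw [Real.sqrt_sq ha.le]
    have hfb : f b = f (Real.sqrt (b ^ 2)) := by
      rw [Real.sqrt_sq (by linarith : (0:ℝ) ≤ b)]
    have hsum : u ^ 2 + v ^ 2
        = (1 - Real.cos θ) / 2 * b ^ 2 + (1 + Real.cos θ) / 2 * a ^ 2 := by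
      have hpy := Real.sin_sq_add_cos_sq θ
      rw [hu, hv, hm, hc]
      linear_combination ((b - a) ^ 2 / 4) * hpy
    have h2 := hsup (u ^ 2) (v ^ 2) (sq_nonneg _) (sq_nonneg _)
    have h3 := hconv.2 (show b ^ 2 ∈ Set.Ici (0:ℝ) from sq_nonneg b)
      (show a ^ 2 ∈ Set.Ici (0:ℝ) from sq_nonneg a)
      (by linarith : (0:ℝ) ≤ (1 - Real.cos θ) / 2)
      (by linarith : (0:ℝ) ≤ (1 + Real.cos θ) / 2)
      (by ring)
    simp only [smul_eq_mul] at h3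
    rw [hfu, hfv, hfa, hfb]
    calc f (Real.sqrt (u ^ 2)) + f (Real.sqrt (v ^ 2))
        ≤ f (Real.sqrt (u ^ 2 + v ^ 2)) := h2
      _ = f (Real.sqrt ((1 - Real.cos θ) / 2 * b ^ 2 + (1 + Real.cos θ) / 2 * a ^ 2)) := by
          rw [hsum]
      _ ≤ (1 - Real.cos θ) / 2 * f (Real.sqrt (b ^ 2))
          + (1 + Real.cos θ) / 2 * f (Real.sqrt (a ^ 2)) := h3
  -- Step 2: transform ∫ x in a..b, f x
  have hderivA : ∀ θ ∈ Set.uIcc (0:ℝ) π, HasDerivAt (fun θ : ℝ => m - c / 2 * Real.cos θ)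
      (c / 2 * Real.sin θ) θ := by
    intro θ _
    have h := ((Real.hasDerivAt_cos θ).const_mul (c / 2)).const_sub m
    exact h.congr_deriv (by ring)
  have hγmaps : ∀ θ : ℝ, (0:ℝ) ≤ m - c / 2 * Real.cos θ := by
    intro θ
    have := Real.cos_le_one θ
    rw [hm, hc]; nlinarith
  have hstep2 : (∫ x in a..b, f x)
      = (c / 2) * ∫ θ in (0:ℝ)..π, Real.sin θ * f (m - c / 2 * Real.cos θ) := by
    have hgc : ContinuousOn f ((fun θ : ℝ => m - c / 2 * Real.cos θ) '' Set.uIcc (0:ℝ) π) := by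
      apply hcont.mono
      rintro x ⟨θ, _, rfl⟩
      exact hγmaps θ
    have h := intervalIntegral.integral_comp_smul_deriv' hderivA (by fun_prop) hgc
    simp only [smul_eq_mul, Function.comp] at h
    have e0 : m - c / 2 * Real.cos 0 = a := by rw [Real.cos_zero, hm, hc]; ring
    have e1 : m - c / 2 * Real.cos π = b := by rw [Real.cos_pi, hm, hc]; ring
    rw [e0, e1] at h
    rw [← h, ← intervalIntegral.integral_const_mul]
    apply intervalIntegral.integral_congr
    intro θ _
    ring
  -- Step 3: transform the singular integral via measure-theoretic change of variables
  have himg : (fun θ : ℝ => c / 2 * Real.sin θ) '' Set.Ioo 0 (π / 2) = Set.Ioo 0 (c / 2) := by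
    ext x
    constructor
    · rintro ⟨θ, ⟨h1, h2⟩, rfl⟩
      have hsin0 : 0 < Real.sin θ := Real.sin_pos_of_pos_of_lt_pi h1 (by linarith [Real.pi_pos])
      have hsin1 : Real.sin θ < 1 := by
        have := Real.strictMonoOn_sin
          (Set.mem_Icc.mpr ⟨by linarith, h2.le⟩)
          (Set.mem_Icc.mpr ⟨by linarith [Real.pi_pos], le_refl _⟩) h2
        simpa using this
      exact ⟨by positivity, by nlinarith⟩
    · rintro ⟨h1, h2⟩
      have hd : 0 < x / (c / 2) := by positivity
      have hd1 : x / (c / 2) < 1 := by rw [div_lt_one (by positivity)]; exact h2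
      refine ⟨Real.arcsin (x / (c / 2)),
        ⟨Real.arcsin_pos.mpr hd, Real.arcsin_lt_pi_div_two.mpr hd1⟩, ?_⟩
      show c / 2 * Real.sin (Real.arcsin (x / (c / 2))) = x
      rw [Real.sin_arcsin (by linarith) hd1.le]
      field_simp
  have hinj : Set.InjOn (fun θ : ℝ => c / 2 * Real.sin θ) (Set.Ioo 0 (π / 2)) := by
    intro x hx y hy hxy
    have hx' : x ∈ Set.Icc (-(π / 2)) (π / 2) := ⟨by linarith [hx.1, Real.pi_pos], hx.2.le⟩
    have hy' : y ∈ Set.Icc (-(π / 2)) (π / 2) := ⟨by linarith [hy.1, Real.pi_pos], hy.2.le⟩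
    have h2ne : (c / 2 : ℝ) ≠ 0 := by positivity
    exact Real.strictMonoOn_sin.injOn hx' hy' (mul_left_cancel₀ h2ne hxy)
  have hdw : ∀ θ ∈ Set.Ioo (0:ℝ) (π / 2), HasDerivWithinAt (fun θ : ℝ => c / 2 * Real.sin θ)
      (c / 2 * Real.cos θ) (Set.Ioo 0 (π / 2)) θ := fun θ _ =>
    ((Real.hasDerivAt_sin θ).const_mul (c / 2)).hasDerivWithinAt
  have hCoV := MeasureTheory.integral_image_eq_integral_abs_deriv_smul measurableSet_Ioo hdw hinj
    (fun x => 4 * x * f x / Real.sqrt (c ^ 2 - 4 * x ^ 2))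
  rw [himg] at hCoV
  have hcongr : (∫ θ in Set.Ioo (0:ℝ) (π / 2), |c / 2 * Real.cos θ| •
        (4 * (c / 2 * Real.sin θ) * f (c / 2 * Real.sin θ)
          / Real.sqrt (c ^ 2 - 4 * (c / 2 * Real.sin θ) ^ 2)))
      = ∫ θ in Set.Ioo (0:ℝ) (π / 2), c * (Real.sin θ * f (c / 2 * Real.sin θ)) := by
    apply MeasureTheory.setIntegral_congr_fun measurableSet_Ioo
    intro θ hθ
    have hcosθ : 0 < Real.cos θ :=
      Real.cos_pos_of_mem_Ioo ⟨by linarith [hθ.1, Real.pi_pos], hθ.2⟩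
    have hsq : c ^ 2 - 4 * (c / 2 * Real.sin θ) ^ 2 = (c * Real.cos θ) ^ 2 := by
      have hpy := Real.sin_sq_add_cos_sq θ
      nlinarith [hpy]
    simp only [smul_eq_mul]
    rw [hsq, Real.sqrt_sq (by positivity), abs_of_pos (by positivity)]
    field_simp
    ring
  have hstep3 : (∫ x in (0:ℝ)..(c / 2), 4 * x * f x / Real.sqrt (c ^ 2 - 4 * x ^ 2))
      = c * ∫ θ in (0:ℝ)..(π / 2), Real.sin θ * f (c / 2 * Real.sin θ) := by
    rw [intervalIntegral.integral_of_le (by positivity : (0:ℝ) ≤ c / 2),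
      MeasureTheory.integral_Ioc_eq_integral_Ioo, hCoV, hcongr,
      MeasureTheory.integral_const_mul,
      ← MeasureTheory.integral_Ioc_eq_integral_Ioo,
      ← intervalIntegral.integral_of_le (by positivity : (0:ℝ) ≤ π / 2)]
  -- continuity facts
  have hB0 : ContinuousOn (fun θ : ℝ => Real.sin θ * f (c / 2 * Real.sin θ)) (Set.Icc 0 π) := by
    apply Real.continuous_sin.continuousOn.mul
    apply hcont.comp ((continuous_const.mul Real.continuous_sin).continuousOn)
    intro θ hθ
    exact Set.mem_Ici.mpr (mul_nonneg (by positivity)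
      (Real.sin_nonneg_of_nonneg_of_le_pi hθ.1 hθ.2))
  have hA0 : ContinuousOn (fun θ : ℝ => Real.sin θ * f (m - c / 2 * Real.cos θ)) (Set.Icc 0 π) := by
    apply Real.continuous_sin.continuousOn.mul
    apply hcont.comp ((continuous_const.sub (continuous_const.mul Real.continuous_cos)).continuousOn)
    intro θ _
    exact Set.mem_Ici.mpr (hγmaps θ)
  have hpi2 : (0:ℝ) ≤ π / 2 := by positivity
  have hpi2' : π / 2 ≤ π := by linarith [Real.pi_pos]
  have hintB1 : IntervalIntegrable (fun θ : ℝ => Real.sin θ * f (c / 2 * Real.sin θ))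
      volume 0 (π / 2) :=
    (hB0.mono (by rw [Set.uIcc_of_le hpi2]; exact Set.Icc_subset_Icc le_rfl hpi2')).intervalIntegrable
  have hintB2 : IntervalIntegrable (fun θ : ℝ => Real.sin θ * f (c / 2 * Real.sin θ))
      volume (π / 2) π :=
    (hB0.mono (by rw [Set.uIcc_of_le hpi2']; exact Set.Icc_subset_Icc hpi2 le_rfl)).intervalIntegrable
  have hintB : IntervalIntegrable (fun θ : ℝ => Real.sin θ * f (c / 2 * Real.sin θ))
      volume 0 π :=
    (hB0.mono (by rw [Set.uIcc_of_le (by linarith : (0:ℝ) ≤ π)])).intervalIntegrable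
  have hintA : IntervalIntegrable (fun θ : ℝ => Real.sin θ * f (m - c / 2 * Real.cos θ))
      volume 0 π :=
    (hA0.mono (by rw [Set.uIcc_of_le (by linarith : (0:ℝ) ≤ π)])).intervalIntegrable
  -- Step 4: reflection
  have hrefl : (∫ θ in (0:ℝ)..(π / 2), Real.sin θ * f (c / 2 * Real.sin θ))
      = ∫ θ in (π / 2)..π, Real.sin θ * f (c / 2 * Real.sin θ) := by
    have h := intervalIntegral.integral_comp_sub_left (a := 0) (b := π / 2)
      (fun θ : ℝ => Real.sin θ * f (c / 2 * Real.sin θ)) π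
    rw [show π - π / 2 = π / 2 by ring, sub_zero] at h
    rw [← h]
    apply intervalIntegral.integral_congr
    intro x _
    simp [Real.sin_pi_sub]
  have hsplit : (∫ θ in (0:ℝ)..π, Real.sin θ * f (c / 2 * Real.sin θ))
      = 2 * ∫ θ in (0:ℝ)..(π / 2), Real.sin θ * f (c / 2 * Real.sin θ) := by
    rw [← intervalIntegral.integral_add_adjacent_intervals hintB1 hintB2, ← hrefl]
    ring
  -- Step 5: integrate pointwise inequality
  have hint1 : IntervalIntegrable
      (fun θ : ℝ => Real.sin θ * (f (m - c / 2 * Real.cos θ) + f (c / 2 * Real.sin θ)))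
      volume 0 π := by
    have : ContinuousOn
        (fun θ : ℝ => Real.sin θ * (f (m - c / 2 * Real.cos θ) + f (c / 2 * Real.sin θ)))
        (Set.uIcc 0 π) := by
      rw [Set.uIcc_of_le (by linarith : (0:ℝ) ≤ π)]
      have := hA0.add hB0
      apply ContinuousOn.congr this
      intro θ _
      simp only [Pi.add_apply]
      ring
    exact this.intervalIntegrable
  have hint2 : IntervalIntegrable
      (fun θ : ℝ => Real.sin θ * ((1 - Real.cos θ) / 2 * f b + (1 + Real.cos θ) / 2 * f a))
      volume 0 π := by
    apply Continuous.intervalIntegrable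
    fun_prop
  have hmono := intervalIntegral.integral_mono_on (by linarith [Real.pi_pos] : (0:ℝ) ≤ π)
    hint1 hint2 (fun θ hθ => by
      have hs : 0 ≤ Real.sin θ := Real.sin_nonneg_of_nonneg_of_le_pi hθ.1 hθ.2
      exact mul_le_mul_of_nonneg_left (key θ hs) hs)
  -- compute RHS integral
  have hRHS : (∫ θ in (0:ℝ)..π,
        Real.sin θ * ((1 - Real.cos θ) / 2 * f b + (1 + Real.cos θ) / 2 * f a))
      = f a + f b := by
    have hd : ∀ θ : ℝ, HasDerivAt
        (fun θ : ℝ => f b / 2 * (-Real.cos θ + Real.cos θ ^ 2 / 2)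
          + f a / 2 * (-Real.cos θ - Real.cos θ ^ 2 / 2))
        (Real.sin θ * ((1 - Real.cos θ) / 2 * f b + (1 + Real.cos θ) / 2 * f a)) θ := by
      intro θ
      have h1 := Real.hasDerivAt_cos θ
      have h2 := ((h1.neg.add ((h1.pow 2).div_const 2)).const_mul (f b / 2)).add
        ((h1.neg.sub ((h1.pow 2).div_const 2)).const_mul (f a / 2))
      exact h2.congr_deriv (by ring)
    rw [intervalIntegral.integral_eq_sub_of_hasDerivAt (fun θ _ => hd θ) hint2]
    simp [Real.cos_pi, Real.cos_zero]
    ring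
  -- assemble
  have hAB : (∫ θ in (0:ℝ)..π, Real.sin θ * f (m - c / 2 * Real.cos θ))
      + (∫ θ in (0:ℝ)..π, Real.sin θ * f (c / 2 * Real.sin θ))
      = ∫ θ in (0:ℝ)..π,
          Real.sin θ * (f (m - c / 2 * Real.cos θ) + f (c / 2 * Real.sin θ)) := by
    rw [← intervalIntegral.integral_add hintA hintB]
    apply intervalIntegral.integral_congr
    intro θ _
    ring
  have hfint : IntervalIntegrable f volume a b := by
    apply ContinuousOn.intervalIntegrable
    apply hcont.mono
    rw [Set.uIcc_of_le hab.le]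
    intro x hx
    exact Set.mem_Ici.mpr (le_trans ha.le hx.1)
  rw [intervalIntegral.integral_add hfint intervalIntegrable_const,
    intervalIntegral.integral_const]
  simp only [smul_eq_mul, ← hc]
  rw [hstep2, hstep3]
  have heq : 1 / c * (c / 2 * (∫ θ in (0:ℝ)..π, Real.sin θ * f (m - c / 2 * Real.cos θ))
        + c * (1 / c * (c * ∫ θ in (0:ℝ)..(π / 2), Real.sin θ * f (c / 2 * Real.sin θ))))
      = ((∫ θ in (0:ℝ)..π, Real.sin θ * f (m - c / 2 * Real.cos θ))
        + 2 * ∫ θ in (0:ℝ)..(π / 2), Real.sin θ * f (c / 2 * Real.sin θ)) / 2 := by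
    field_simp
  rw [heq, ← hsplit, hAB]
  linarith [hmono, hRHS]
end

section
/- If f is 2-radical convex, then 3∫₀^{1/4} f(x) dx + ∫_{1/4}^{3/4} f(x) dx ≤ ∫_{3/4}^{1} f(x) dx. -/
open intervalIntegral MeasureTheory

theorem two_radical_convex_integral_bound (f : ℝ → ℝ)
    (hmap : ∀ x ∈ Set.Ici (0:ℝ), 0 ≤ f x)
    (hcont : ContinuousOn f (Set.Ici 0))
    (hf0 : f 0 = 0)
    (hconv : ConvexOn ℝ (Set.Ici 0) (fun x => f (Real.sqrt x))) :
    3 * ∫ x in (0:ℝ)..(1/4 : ℝ), f x + ∫ x in (1/4 : ℝ)..(3/4 : ℝ), f x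
      ≤ ∫ x in (3/4 : ℝ)..(1 : ℝ), f x := by
  set g : ℝ → ℝ := fun x => f (Real.sqrt x) with hg
  have hg0 : g 0 = 0 := by simp [hg, hf0]
  -- key convexity estimate: s * g t ≤ t * g s for 0 ≤ t ≤ s
  have hkey : ∀ t s : ℝ, 0 ≤ t → t ≤ s → s * g t ≤ t * g s := by
    intro t s ht hts
    rcases eq_or_lt_of_le (ht.trans hts) with hs | hs
    · have ht0 : t = 0 := le_antisymm (hts.trans hs.symm.le) ht
      simp [← hs, ht0]
    · have ha : 0 ≤ t / s := div_nonneg ht hs.le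
      have hb : 0 ≤ 1 - t / s := by
        have : t / s ≤ 1 := (div_le_one hs).2 hts
        linarith
      have h := hconv.2 (Set.mem_Ici.2 hs.le) (Set.mem_Ici.2 le_rfl) ha hb (by ring)
      simp only [smul_eq_mul, mul_zero, add_zero, hg0] at h
      have he : t / s * s = t := div_mul_cancel₀ t hs.ne'
      rw [he] at h
      calc s * g t ≤ s * (t / s * g s) := by
            exact mul_le_mul_of_nonneg_left h hs.le
        _ = t * g s := by field_simp
  have he : ∀ y : ℝ, 0 ≤ y → f y = g (y^2) := by
    intro y hy
    simp [hg, Real.sqrt_sq hy]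
  -- pointwise inequality
  have hpt : ∀ x ∈ Set.Icc (0:ℝ) (1/4 : ℝ),
      (fun x => 3 * f x + (f (x + 1/4) + f (x + 1/2))) x ≤ (fun x => f (x + 3/4)) x := by
    intro x hx
    obtain ⟨hx0, hx4⟩ := hx
    have hs : (0:ℝ) < (x + 3/4)^2 := by positivity
    simp only
    rw [he x hx0, he (x + 1/4) (by linarith), he (x + 1/2) (by linarith),
      he (x + 3/4) (by linarith)]
    have h1 := hkey (x^2) ((x + 3/4)^2) (by positivity) (by nlinarith)
    have h2 := hkey ((x + 1/4)^2) ((x + 3/4)^2) (by positivity) (by nlinarith)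
    have h3 := hkey ((x + 1/2)^2) ((x + 3/4)^2) (by positivity) (by nlinarith)
    have hgpos : 0 ≤ g ((x + 3/4)^2) :=
      hmap _ (Set.mem_Ici.2 (Real.sqrt_nonneg _))
    -- s*(3 g t1 + g t2 + g t3) ≤ (3t1+t2+t3) g s ≤ s * g s
    have hsum : 3 * x^2 + ((x + 1/4)^2 + (x + 1/2)^2) ≤ (x + 3/4)^2 := by nlinarith
    nlinarith [mul_le_mul_of_nonneg_right hsum hgpos]
  -- integrability
  have hii : ∀ a b : ℝ, 0 ≤ a → a ≤ b → IntervalIntegrable f volume a b := by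
    intro a b ha hab
    exact (hcont.mono (by rw [Set.uIcc_of_le hab]; exact fun x hx => ha.trans hx.1)).intervalIntegrable
  have i01 : IntervalIntegrable f volume 0 (1/4) := hii 0 (1/4) le_rfl (by norm_num)
  have i12 : IntervalIntegrable f volume (1/4) (1/2) := hii _ _ (by norm_num) (by norm_num)
  have i23 : IntervalIntegrable f volume (1/2) (3/4) := hii _ _ (by norm_num) (by norm_num)
  have i34 : IntervalIntegrable f volume (3/4) 1 := hii _ _ (by norm_num) (by norm_num)
  have j1 : IntervalIntegrable (fun x => f (x + 1/4)) volume 0 (1/4) := by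
    have := i12.comp_add_right (1/4); norm_num at this; exact this
  have j2 : IntervalIntegrable (fun x => f (x + 1/2)) volume 0 (1/4) := by
    have := i23.comp_add_right (1/2); norm_num at this; exact this
  have j3 : IntervalIntegrable (fun x => f (x + 3/4)) volume 0 (1/4) := by
    have := i34.comp_add_right (3/4); norm_num at this; exact this
  have hL : IntervalIntegrable (fun x => 3 * f x + (f (x + 1/4) + f (x + 1/2))) volume 0 (1/4) :=
    ((i01.const_mul 3).add (j1.add j2))
  have hmono := intervalIntegral.integral_mono_on (by norm_num : (0:ℝ) ≤ 1/4) hL j3 hpt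
  have eL : ∫ x in (0:ℝ)..(1/4:ℝ), (3 * f x + (f (x + 1/4) + f (x + 1/2)))
      = 3 * (∫ x in (0:ℝ)..(1/4:ℝ), f x) + ((∫ x in (1/4:ℝ)..(1/2:ℝ), f x) + (∫ x in (1/2:ℝ)..(3/4:ℝ), f x)) := by
    rw [intervalIntegral.integral_add (i01.const_mul 3) (j1.add j2),
      intervalIntegral.integral_add j1 j2,
      intervalIntegral.integral_const_mul,
      intervalIntegral.integral_comp_add_right (fun x => f x) (1/4),
      intervalIntegral.integral_comp_add_right (fun x => f x) (1/2)]
    norm_num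
  have eR : ∫ x in (0:ℝ)..(1/4:ℝ), f (x + 3/4) = ∫ x in (3/4:ℝ)..(1:ℝ), f x := by
    rw [intervalIntegral.integral_comp_add_right (fun x => f x) (3/4)]
    norm_num
  have e2 : (∫ x in (1/4:ℝ)..(3/4:ℝ), f x)
      = (∫ x in (1/4:ℝ)..(1/2:ℝ), f x) + (∫ x in (1/2:ℝ)..(3/4:ℝ), f x) :=
    (intervalIntegral.integral_add_adjacent_intervals i12 i23).symm
  have hI2 : 0 ≤ ∫ x in (1/4:ℝ)..(3/4:ℝ), f x :=
    intervalIntegral.integral_nonneg (by norm_num)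
      (fun x hx => hmap x (Set.mem_Ici.2 (le_trans (by norm_num) hx.1)))
  have expand : (∫ x in (0:ℝ)..(1/4:ℝ), (f x + ∫ y in (1/4:ℝ)..(3/4:ℝ), f y))
      = (∫ x in (0:ℝ)..(1/4:ℝ), f x) + (1/4) * ∫ y in (1/4:ℝ)..(3/4:ℝ), f y := by
    rw [intervalIntegral.integral_add i01 intervalIntegrable_const,
      intervalIntegral.integral_const]
    norm_num
  have main : 3 * (∫ x in (0:ℝ)..(1/4:ℝ), f x) + ((∫ x in (1/4:ℝ)..(1/2:ℝ), f x) + (∫ x in (1/2:ℝ)..(3/4:ℝ), f x)) ≤ ∫ x in (3/4:ℝ)..(1:ℝ), f x := calc 3 * (∫ x in (0:ℝ)..(1/4:ℝ), f x) + ((∫ x in (1/4:ℝ)..(1/2:ℝ), f x) + (∫ x in (1/2:ℝ)..(3/4:ℝ), f x))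
      = ∫ x in (0:ℝ)..(1/4:ℝ), (3 * f x + (f (x + 1/4) + f (x + 1/2))) := eL.symm
    _ ≤ ∫ x in (0:ℝ)..(1/4:ℝ), f (x + 3/4) := hmono
    _ = ∫ x in (3/4:ℝ)..(1:ℝ), f x := eR
  rw [e2] at hI2
  show 3 * (∫ x in (0:ℝ)..(1/4:ℝ), (f x + ∫ y in (1/4:ℝ)..(3/4:ℝ), f y)) ≤ _
  rw [expand, e2]
  linarith [main, hI2]
end

section
/- If f is p-radical convex for some p ≥ 1, then for every x ≥ 0: ∫₀ˣ f(t) dt ≤ (x/(p+1)) f(x). -/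
theorem p_radical_convex_average (f : ℝ → ℝ) (p : ℝ) (hp : 1 ≤ p)
    (hmap : ∀ x ∈ Set.Ici (0:ℝ), 0 ≤ f x)
    (hcont : ContinuousOn f (Set.Ici 0))
    (hf0 : f 0 = 0)
    (hconv : ConvexOn ℝ (Set.Ici 0) (fun x => f (x ^ (1/p))))
    (x : ℝ) (hx : 0 ≤ x) :
    ∫ t in (0:ℝ)..x, f t ≤ x / (p + 1) * f x := by
  have hp0 : (0:ℝ) < p := lt_of_lt_of_le one_pos hp
  rcases eq_or_lt_of_le hx with rfl | hx'
  · simp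
  have hxp : 0 < x ^ p := Real.rpow_pos_of_pos hx' p
  have hg0 : f ((0:ℝ) ^ (1/p)) = 0 := by
    rw [Real.zero_rpow (by positivity), hf0]
  have hgx : f ((x ^ p) ^ (1/p)) = f x := by
    rw [← Real.rpow_mul hx'.le, mul_one_div_cancel hp0.ne', Real.rpow_one]
  have key : ∀ t ∈ Set.Icc (0:ℝ) x, f t ≤ t ^ p / x ^ p * f x := by
    intro t ht
    obtain ⟨ht0, htx⟩ := ht
    set l := t ^ p / x ^ p with hl
    have hl0 : 0 ≤ l := div_nonneg (Real.rpow_nonneg ht0 p) hxp.le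
    have hl1 : l ≤ 1 := div_le_one_of_le₀ (Real.rpow_le_rpow ht0 htx hp0.le) hxp.le
    have hc := hconv.2 (Set.self_mem_Ici) (show (x ^ p) ∈ Set.Ici (0:ℝ) from hxp.le)
      (by linarith : (0:ℝ) ≤ 1 - l) hl0 (by ring)
    simp only [smul_eq_mul, mul_zero, zero_add] at hc
    have hlx : l * x ^ p = t ^ p := by
      rw [hl, div_mul_cancel₀ _ hxp.ne']
    rw [hlx] at hc
    have htp : (t ^ p) ^ (1/p) = t := by
      rw [← Real.rpow_mul ht0, mul_one_div_cancel hp0.ne', Real.rpow_one]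
    rw [htp, hg0, hgx] at hc
    linarith
  have hint_f : IntervalIntegrable f MeasureTheory.volume 0 x := by
    apply ContinuousOn.intervalIntegrable
    apply hcont.mono
    rw [Set.uIcc_of_le hx]
    exact fun t ht => ht.1
  have hint_g : IntervalIntegrable (fun t => t ^ p / x ^ p * f x)
      MeasureTheory.volume 0 x := by
    have := (intervalIntegral.intervalIntegrable_rpow (μ := MeasureTheory.volume) (r := p) (a := 0) (b := x)
      (Or.inl hp0.le))
    simpa [div_mul_eq_mul_div, mul_div_assoc] using this.mul_const (f x / x ^ p)
  calc ∫ t in (0:ℝ)..x, f t ≤ ∫ t in (0:ℝ)..x, t ^ p / x ^ p * f x :=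
        intervalIntegral.integral_mono_on hx hint_f hint_g key
    _ = (∫ t in (0:ℝ)..x, t ^ p) * (f x / x ^ p) := by
        rw [← intervalIntegral.integral_mul_const]
        congr 1; ext t; ring
    _ = x / (p + 1) * f x := by
        rw [integral_rpow (Or.inl (by linarith : (-1:ℝ) < p))]
        rw [Real.zero_rpow (by linarith : p + 1 ≠ 0)]
        have : x ^ (p + 1) = x ^ p * x := by
          rw [Real.rpow_add hx', Real.rpow_one]
        rw [this]
        field_simp
        ring
end

section
/- If f : [0,∞) → [0,∞) is continuous with f(0) = 0 and f is p-radical convex for every p ≥ 1, then f is identically zero. -/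
theorem all_p_radical_convex_zero (f : ℝ → ℝ)
    (hmap : ∀ x ∈ Set.Ici (0:ℝ), 0 ≤ f x)
    (hcont : ContinuousOn f (Set.Ici 0))
    (hf0 : f 0 = 0)
    (hconv : ∀ p : ℝ, 1 ≤ p → ConvexOn ℝ (Set.Ici 0) (fun x => f (x ^ (1/p)))) :
    ∀ x ∈ Set.Ici (0:ℝ), f x = 0 := by
  intro x hx
  have hx0 : (0:ℝ) ≤ x := hx
  rcases eq_or_lt_of_le hx0 with h0 | hxpos
  · rw [← h0]; exact hf0
  have key : ∀ p : ℝ, 1 ≤ p → f x ≤ (1/2:ℝ)^p * f (2*x) := by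
    intro p hp
    have hp0 : (0:ℝ) < p := lt_of_lt_of_le one_pos hp
    have hC := hconv p hp
    have h2x : (0:ℝ) ≤ 2*x := by linarith
    have hB : ((2*x)^p : ℝ) ∈ Set.Ici (0:ℝ) := Set.mem_Ici.2 (Real.rpow_nonneg h2x p)
    have h0' : (0:ℝ) ∈ Set.Ici (0:ℝ) := Set.mem_Ici.2 le_rfl
    set t : ℝ := (1/2:ℝ)^p with ht
    have ht0 : 0 ≤ t := Real.rpow_nonneg (by norm_num) p
    have ht1 : t ≤ 1 := Real.rpow_le_one (by norm_num) (by norm_num) (le_of_lt hp0)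
    have hc := hC.2 h0' hB (by linarith : (0:ℝ) ≤ 1 - t) ht0 (by ring)
    simp only [smul_eq_mul, mul_zero, zero_add] at hc
    have e0 : (0:ℝ) ^ (1/p) = 0 := Real.zero_rpow (by positivity)
    have e1 : ((2*x:ℝ)^p) ^ (1/p) = 2*x := by
      rw [← Real.rpow_mul h2x, mul_one_div_cancel (ne_of_gt hp0), Real.rpow_one]
    have e2 : (t * (2*x)^p) ^ (1/p) = x := by
      rw [ht, ← Real.mul_rpow (by norm_num) h2x]
      have : (1/2:ℝ) * (2*x) = x := by ring
      rw [this, ← Real.rpow_mul hx0, mul_one_div_cancel (ne_of_gt hp0), Real.rpow_one]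
    rw [e0, e1, e2, hf0, mul_zero, zero_add] at hc
    exact hc
  have htend : Filter.Tendsto (fun p : ℝ => (1/2:ℝ)^p * f (2*x)) Filter.atTop (nhds 0) := by
    have h1 : Filter.Tendsto (fun p : ℝ => (1/2:ℝ)^p) Filter.atTop (nhds 0) :=
      tendsto_rpow_atTop_of_base_lt_one (1/2) (by norm_num) (by norm_num)
    simpa using h1.mul_const (f (2*x))
  have hle : f x ≤ 0 := by
    refine ge_of_tendsto htend ?_
    filter_upwards [Filter.eventually_ge_atTop (1:ℝ)] with p hp
    exact key p hp
  exact le_antisymm hle (hmap x hx)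
end

section
/- If f is 4-radical convex, then for all a, b ≥ 0 and t ∈ [0,1]: f((1−t)a + tb) + f(√(t(1−t)) |a−b|) + f((2t(1−t))^{1/4} √(|a−b| ((1−t)a + tb))) ≤ (1−t) f(a) + t f(b). -/
theorem four_radical_convex_refinement (f : ℝ → ℝ)
    (hmap : ∀ x ∈ Set.Ici (0:ℝ), 0 ≤ f x)
    (hcont : ContinuousOn f (Set.Ici 0))
    (hf0 : f 0 = 0)
    (hconv : ConvexOn ℝ (Set.Ici 0) (fun x => f (x ^ ((1:ℝ)/4))))
    (a b : ℝ) (ha : 0 ≤ a) (hb : 0 ≤ b) (t : ℝ) (ht : t ∈ Set.Icc (0:ℝ) 1) :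
    f ((1 - t) * a + t * b) + f (Real.sqrt (t * (1 - t)) * |a - b|)
      + f ((2 * t * (1 - t)) ^ ((1:ℝ)/4) * Real.sqrt (|a - b| * ((1 - t) * a + t * b)))
      ≤ (1 - t) * f a + t * f b := by
  obtain ⟨ht0, ht1⟩ := ht
  set g : ℝ → ℝ := fun x => f (x ^ ((1:ℝ)/4)) with hg
  have hg0 : g 0 = 0 := by
    simp only [hg]
    rw [Real.zero_rpow (by norm_num : (1:ℝ)/4 ≠ 0), hf0]
  have hgnn : ∀ u : ℝ, 0 ≤ u → 0 ≤ g u := fun u hu =>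
    hmap _ (Real.rpow_nonneg hu _)
  have hfg : ∀ x : ℝ, 0 ≤ x → f x = g (x ^ 4) := by
    intro x hx
    have h4 : (x ^ 4) ^ ((1:ℝ)/4) = x := by
      rw [← Real.rpow_natCast x 4, ← Real.rpow_mul hx]
      norm_num
    simp only [hg, h4]
  have hsuper : ∀ u v : ℝ, 0 ≤ u → 0 ≤ v → g u + g v ≤ g (u + v) := by
    intro u v hu hv
    rcases eq_or_lt_of_le (add_nonneg hu hv) with h | h
    · have hu0 : u = 0 := by linarith
      have hv0 : v = 0 := by linarith
      simp [hu0, hv0, hg0]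
    · have hw : (0:ℝ) < u + v := h
      have hmem : (u + v) ∈ Set.Ici (0:ℝ) := hw.le
      have hmem0 : (0:ℝ) ∈ Set.Ici (0:ℝ) := Set.mem_Ici.2 le_rfl
      have h1 : g u ≤ (u/(u+v)) * g (u+v) := by
        have := hconv.2 hmem hmem0 (div_nonneg hu hw.le) (div_nonneg hv hw.le)
          (by field_simp; try ring)
        simpa [smul_eq_mul, hg0, div_mul_cancel₀, hw.ne'] using this
      have h2 : g v ≤ (v/(u+v)) * g (u+v) := by
        have := hconv.2 hmem hmem0 (div_nonneg hv hw.le) (div_nonneg hu hw.le)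
          (by field_simp; try ring)
        simpa [smul_eq_mul, hg0, div_mul_cancel₀, hw.ne'] using this
      have h3 : (u/(u+v)) * g (u+v) + (v/(u+v)) * g (u+v) = g (u+v) := by
        field_simp
      linarith
  have hmono : ∀ u v : ℝ, 0 ≤ u → u ≤ v → g u ≤ g v := by
    intro u v hu huv
    have h1 := hsuper u (v - u) hu (by linarith)
    have h2 := hgnn (v - u) (by linarith)
    have h3 : u + (v - u) = v := by ring
    rw [h3] at h1
    linarith
  set m : ℝ := (1 - t) * a + t * b with hm_def
  set d : ℝ := |a - b| with hd_def
  have hm : 0 ≤ m := add_nonneg (mul_nonneg (by linarith) ha) (mul_nonneg ht0 hb)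
  have hd : 0 ≤ d := abs_nonneg _
  have ht' : 0 ≤ t * (1 - t) := mul_nonneg ht0 (by linarith)
  have h2t : 0 ≤ 2 * t * (1 - t) := by nlinarith
  set s : ℝ := Real.sqrt (t * (1 - t)) * d with hs_def
  set r : ℝ := (2 * t * (1 - t)) ^ ((1:ℝ)/4) * Real.sqrt (d * m) with hr_def
  have hs : 0 ≤ s := mul_nonneg (Real.sqrt_nonneg _) hd
  have hr : 0 ≤ r := mul_nonneg (Real.rpow_nonneg h2t _) (Real.sqrt_nonneg _)
  have hd2 : d ^ 2 = (a - b) ^ 2 := sq_abs _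
  have hs4 : s ^ 4 = (t * (1 - t)) ^ 2 * (a - b) ^ 4 := by
    rw [hs_def, mul_pow]
    have : Real.sqrt (t * (1 - t)) ^ 4 = ((Real.sqrt (t * (1 - t))) ^ 2) ^ 2 := by ring
    rw [this, Real.sq_sqrt ht']
    have : d ^ 4 = (d ^ 2) ^ 2 := by ring
    rw [this, hd2]; ring
  have hr4 : r ^ 4 = 2 * t * (1 - t) * ((a - b) ^ 2 * m ^ 2) := by
    rw [hr_def, mul_pow]
    have h1 : ((2 * t * (1 - t)) ^ ((1:ℝ)/4)) ^ 4 = 2 * t * (1 - t) := by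
      rw [← Real.rpow_natCast ((2 * t * (1 - t)) ^ ((1:ℝ)/4)) 4,
        ← Real.rpow_mul h2t]
      norm_num
    have h2 : Real.sqrt (d * m) ^ 4 = (d * m) ^ 2 := by
      have : Real.sqrt (d * m) ^ 4 = ((Real.sqrt (d * m)) ^ 2) ^ 2 := by ring
      rw [this, Real.sq_sqrt (mul_nonneg hd hm)]
    rw [h1, h2, mul_pow, hd2]
  have hkey : m ^ 4 + s ^ 4 + r ^ 4 = ((1 - t) * a ^ 2 + t * b ^ 2) ^ 2 := by
    rw [hs4, hr4, hm_def]; ring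
  have hconvsq : ((1 - t) * a ^ 2 + t * b ^ 2) ^ 2 ≤ (1 - t) * a ^ 4 + t * b ^ 4 := by
    nlinarith [mul_nonneg ht' (sq_nonneg (a ^ 2 - b ^ 2))]
  have hstep1 : g (m ^ 4) + g (s ^ 4) + g (r ^ 4) ≤ g (m ^ 4 + s ^ 4 + r ^ 4) := by
    have h1 := hsuper (m ^ 4) (s ^ 4) (pow_nonneg hm 4) (pow_nonneg hs 4)
    have h2 := hsuper (m ^ 4 + s ^ 4) (r ^ 4)
      (add_nonneg (pow_nonneg hm 4) (pow_nonneg hs 4)) (pow_nonneg hr 4)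
    linarith
  have hstep2 : g (m ^ 4 + s ^ 4 + r ^ 4) ≤ g ((1 - t) * a ^ 4 + t * b ^ 4) := by
    rw [hkey]
    exact hmono _ _ (sq_nonneg _) hconvsq
  have hstep3 : g ((1 - t) * a ^ 4 + t * b ^ 4) ≤ (1 - t) * g (a ^ 4) + t * g (b ^ 4) := by
    have := hconv.2 (Set.mem_Ici.2 (pow_nonneg ha 4)) (Set.mem_Ici.2 (pow_nonneg hb 4))
      (by linarith : (0:ℝ) ≤ 1 - t) ht0 (by ring)
    simpa [smul_eq_mul] using this
  rw [hfg _ hm, hfg _ hs, hfg _ hr, hfg a ha, hfg b hb]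
  linarith
end
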